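/- For all 0 ≤ k ≤ n, the uniform matroid U_{n,k} is 2-level, i.e., Lev(V_{U_{n,k}}) ≤ 2; consequently its Theta rank is at most 1. -/

import Mathlib

open MvPolynomial Set

noncomputable section

/-- `f` is an affine-linear polynomial (degree at most one). -/
def IsAffLin {ι : Type} (f : MvPolynomial ι ℝ) : Prop := f.totalDegree ≤ 1

/-- `f` is nonnegative on `V`. -/
def NonnegOn {ι : Type} (V : Set (ι → ℝ)) (f : MvPolynomial ι ℝ) : Prop :=
  ∀ v ∈ V, 0 ≤ eval v f

/-- `ℓ` is `k`-sos with respect to `V`: on `V` it agrees with a sum of squares of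
polynomials of degree at most `k`. -/
def IsKSos {ι : Type} (V : Set (ι → ℝ)) (k : ℕ) (ℓ : MvPolynomial ι ℝ) : Prop :=
  ∃ (s : ℕ) (h : Fin s → MvPolynomial ι ℝ),
    (∀ i, (h i).totalDegree ≤ k) ∧ ∀ v ∈ V, eval v ℓ = ∑ i, (eval v (h i)) ^ 2

/-- The Theta rank of a point configuration `V`. -/
def thetaRank {ι : Type} (V : Set (ι → ℝ)) : ℕ :=
  sInf {k | ∀ ℓ, IsAffLin ℓ → NonnegOn V ℓ → IsKSos V k ℓ}

/-- `F` is a face of `V`. -/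
def IsFaceOf {ι : Type} (V F : Set (ι → ℝ)) : Prop :=
  ∃ g, IsAffLin g ∧ NonnegOn V g ∧ F = {v ∈ V | eval v g = 0}

/-- `F` is a facet of `V`: an inclusion-maximal proper face. -/
def IsFacetOf {ι : Type} (V F : Set (ι → ℝ)) : Prop :=
  IsFaceOf V F ∧ F ≠ V ∧ ∀ F', IsFaceOf V F' → F' ≠ V → F ⊆ F' → F' = F

/-- `ℓ` is a facet-defining affine-linear function for `V`. -/
def IsFacetDefining {ι : Type} (V : Set (ι → ℝ)) (ℓ : MvPolynomial ι ℝ) : Prop :=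
  IsAffLin ℓ ∧ NonnegOn V ℓ ∧ IsFacetOf V {v ∈ V | eval v ℓ = 0}

/-- The levelness of a point configuration `V`. -/
def levelness {ι : Type} (V : Set (ι → ℝ)) : ℕ :=
  sInf {k | ∀ ℓ, IsFacetDefining V ℓ → ((fun v => eval v ℓ) '' V).ncard ≤ k}

/-- The base configuration of a matroid: the 0/1 indicator vectors of its bases. -/
def baseConfig {α : Type} (M : Matroid α) : Set (α → ℝ) :=
  {x | ∃ B, M.IsBase B ∧ x = Set.indicator B 1}


lemma monom_classify {n : ℕ} {m : Fin n →₀ ℕ} (hm : (m.sum fun _ e => e) ≤ 1) :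
    m = 0 ∨ ∃ j, m = Finsupp.single j 1 := by
  by_cases h0 : m = 0
  · exact Or.inl h0
  · right
    obtain ⟨j, hj⟩ := Finsupp.ne_iff.mp h0
    simp only [Finsupp.coe_zero, Pi.zero_apply] at hj
    have hjs : j ∈ m.support := Finsupp.mem_support_iff.mpr hj
    have hsum : (m.sum fun _ e => e) = ∑ x ∈ m.support, m x := rfl
    have hle : m j ≤ ∑ x ∈ m.support, m x :=
      Finset.single_le_sum (fun _ _ => Nat.zero_le _) hjs
    have hmj : m j = 1 := le_antisymm (by omega) (Nat.one_le_iff_ne_zero.mpr hj)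
    refine ⟨j, Finsupp.ext fun x => ?_⟩
    rw [Finsupp.single_apply]
    rcases eq_or_ne j x with rfl | hx
    · simp [hmj]
    · simp only [if_neg hx]
      by_contra hx0
      have hxs : x ∈ m.support := Finsupp.mem_support_iff.mpr hx0
      have hsub : {j, x} ⊆ m.support := by
        intro y hy
        rcases Finset.mem_insert.mp hy with rfl | hy
        · exact hjs
        · rwa [Finset.mem_singleton.mp hy]
      have : ∑ y ∈ ({j, x} : Finset (Fin n)), m y ≤ ∑ y ∈ m.support, m y :=
        Finset.sum_le_sum_of_subset hsub
      rw [Finset.sum_pair (fun h => hx h)] at this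
      omega

lemma single_ne_zero' {n : ℕ} (j : Fin n) : (Finsupp.single j 1 : Fin n →₀ ℕ) ≠ 0 := by
  intro h
  have := Finsupp.ext_iff.mp h j
  simp at this

lemma eval_affine {n : ℕ} {f : MvPolynomial (Fin n) ℝ} (hf : f.totalDegree ≤ 1) (v : Fin n → ℝ) :
    eval v f = f.coeff 0 + ∑ i, f.coeff (Finsupp.single i 1) * v i := by
  rw [eval_eq']
  have hsub : f.support ⊆ insert 0 (Finset.image (fun j => Finsupp.single j 1) Finset.univ) := by
    intro m hm
    rcases monom_classify (le_trans (le_totalDegree hm) hf) with rfl | ⟨j, rfl⟩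
    · exact Finset.mem_insert_self _ _
    · exact Finset.mem_insert_of_mem (Finset.mem_image.mpr ⟨j, Finset.mem_univ _, rfl⟩)
  rw [Finset.sum_subset hsub (fun m _ hm => by
    rw [notMem_support_iff.mp hm, zero_mul])]
  rw [Finset.sum_insert (by
    simp only [Finset.mem_image, not_exists]
    intro j
    intro h
    exact single_ne_zero' j h.2)]
  rw [Finset.sum_image (fun a _ b _ h => Finsupp.single_left_injective one_ne_zero h)]
  congr 1
  · simp
  · refine Finset.sum_congr rfl fun j _ => ?_
    congr 1
    rw [Finset.prod_eq_single j (fun i _ hi => by simp [Finsupp.single_apply, hi.symm]) (by simp)]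
    simp


lemma mem_baseConfig_iff {n k : ℕ} {M : Matroid (Fin n)}
    (hB : ∀ B, M.IsBase B ↔ B.ncard = k) {v : Fin n → ℝ} :
    v ∈ {x | ∃ B, M.IsBase B ∧ x = Set.indicator B 1} ↔
      ∃ S : Finset (Fin n), S.card = k ∧ v = Set.indicator ↑S 1 := by
  constructor
  · rintro ⟨B, hBb, rfl⟩
    haveI : Fintype B := Set.Finite.fintype (Set.toFinite B)
    refine ⟨B.toFinset, ?_, by rw [Set.coe_toFinset]⟩
    rw [← Set.ncard_coe_finset, Set.coe_toFinset]
    exact (hB B).mp hBb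
  · rintro ⟨S, hS, rfl⟩
    exact ⟨↑S, (hB ↑S).mpr (by rw [Set.ncard_coe_finset, hS]), rfl⟩

lemma indicator_apply' {n : ℕ} (S : Finset (Fin n)) (i : Fin n) :
    Set.indicator (↑S) (1 : Fin n → ℝ) i = if i ∈ S then 1 else 0 := by
  simp [Set.indicator_apply]

lemma sum_mul_indicator {n : ℕ} (c : Fin n → ℝ) (S : Finset (Fin n)) :
    ∑ i, c i * Set.indicator (↑S) (1 : Fin n → ℝ) i = ∑ i ∈ S, c i := by
  have : ∀ i, c i * Set.indicator (↑S) (1 : Fin n → ℝ) i = if i ∈ S then c i else 0 := by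
    intro i; rw [indicator_apply']; split <;> simp
  rw [Finset.sum_congr rfl fun i _ => this i, Finset.sum_ite_mem, Finset.univ_inter]


lemma partA_decomp {n k : ℕ} (hk : k ≤ n) (c₀ : ℝ) (c : Fin n → ℝ)
    (hnn : ∀ S : Finset (Fin n), S.card = k → 0 ≤ c₀ + ∑ i ∈ S, c i) :
    ∃ (m : ℝ) (a b : Fin n → ℝ), 0 ≤ m ∧ (∀ i, 0 ≤ a i) ∧ (∀ i, 0 ≤ b i) ∧
      ∀ S : Finset (Fin n), S.card = k →
        c₀ + ∑ i ∈ S, c i = m + ∑ i ∈ S, a i + ∑ i ∈ Sᶜ, b i := by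
  have hne : (Finset.powersetCard k (Finset.univ : Finset (Fin n))).Nonempty :=
    Finset.powersetCard_nonempty.mpr (by simpa using hk)
  obtain ⟨S₀, hS₀mem, hS₀min⟩ :=
    Finset.exists_min_image _ (fun S => c₀ + ∑ i ∈ S, c i) hne
  have hS₀card : S₀.card = k := (Finset.mem_powersetCard.mp hS₀mem).2
  -- exchange
  have exch : ∀ i ∈ S₀, ∀ j, j ∉ S₀ → c i ≤ c j := by
    intro i hi j hj
    have hcard : (insert j (S₀.erase i)).card = k := by
      rw [Finset.card_insert_of_notMem (fun h => hj (Finset.mem_of_mem_erase h)),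
        Finset.card_erase_of_mem hi, hS₀card]
      have : 0 < k := hS₀card ▸ Finset.card_pos.mpr ⟨i, hi⟩
      omega
    have hmem : insert j (S₀.erase i) ∈ Finset.powersetCard k (Finset.univ : Finset (Fin n)) :=
      Finset.mem_powersetCard.mpr ⟨Finset.subset_univ _, hcard⟩
    have := hS₀min _ hmem
    rw [Finset.sum_insert (fun h => hj (Finset.mem_of_mem_erase h)),
      Finset.sum_erase_eq_sub hi] at this
    linarith
  -- choose θ
  obtain ⟨θ, hθ₁, hθ₂⟩ : ∃ θ : ℝ, (∀ i ∈ S₀, c i ≤ θ) ∧ (∀ j, j ∉ S₀ → θ ≤ c j) := by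
    rcases S₀.eq_empty_or_nonempty with rfl | hS₀ne
    · rcases isEmpty_or_nonempty (Fin n) with h | h
      · exact ⟨0, by simp, fun j => (IsEmpty.false j).elim⟩
      · obtain ⟨j₀, _, hj₀⟩ := Finset.exists_min_image (Finset.univ : Finset (Fin n)) c
          Finset.univ_nonempty
        exact ⟨c j₀, by simp, fun j _ => hj₀ j (Finset.mem_univ j)⟩
    · obtain ⟨i₀, hi₀, hi₀max⟩ := Finset.exists_max_image S₀ c hS₀ne
      exact ⟨c i₀, hi₀max, fun j hj => exch i₀ hi₀ j hj⟩
  refine ⟨c₀ + ∑ i ∈ S₀, c i, fun i => max (c i - θ) 0, fun i => max (θ - c i) 0,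
    hnn S₀ hS₀card, fun i => le_max_right _ _, fun i => le_max_right _ _, ?_⟩
  intro S hS
  have hab : ∀ i, c i = θ + max (c i - θ) 0 - max (θ - c i) 0 := by
    intro i
    rcases le_total (c i) θ with h | h
    · rw [max_eq_right (by linarith), max_eq_left (by linarith)]; ring
    · rw [max_eq_left (by linarith), max_eq_right (by linarith)]; ring
  have hbS₀ : ∀ i ∈ S₀, max (θ - c i) 0 = θ - c i := fun i hi =>
    max_eq_left (by linarith [hθ₁ i hi])
  have hbS₀c : ∀ i, i ∉ S₀ → max (θ - c i) 0 = 0 := fun i hi =>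
    max_eq_right (by linarith [hθ₂ i hi])
  have hsumb : ∑ i, max (θ - c i) 0 = k * θ - ∑ i ∈ S₀, c i := by
    rw [← Finset.sum_subset (Finset.subset_univ S₀) (fun i _ hi => hbS₀c i hi)]
    rw [Finset.sum_congr rfl hbS₀, Finset.sum_sub_distrib, Finset.sum_const, hS₀card]
    push_cast; ring
  have hsumS : ∑ i ∈ S, c i
      = k * θ + ∑ i ∈ S, max (c i - θ) 0 - ∑ i ∈ S, max (θ - c i) 0 := by
    rw [Finset.sum_congr rfl (fun i _ => hab i), Finset.sum_sub_distrib,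
      Finset.sum_add_distrib, Finset.sum_const, hS]
    push_cast; ring
  have hcompl : ∑ i ∈ Sᶜ, max (θ - c i) 0 = ∑ i, max (θ - c i) 0 - ∑ i ∈ S, max (θ - c i) 0 := by
    rw [← Finset.sum_add_sum_compl S (fun i => max (θ - c i) 0)]; ring
  rw [hsumS, hcompl, hsumb]; ring

lemma partA_sos {n k : ℕ} (hk : k ≤ n) (V : Set (Fin n → ℝ))
    (hV : ∀ v, v ∈ V ↔ ∃ S : Finset (Fin n), S.card = k ∧ v = Set.indicator ↑S 1)
    (ℓ : MvPolynomial (Fin n) ℝ) (haff : IsAffLin ℓ) (hnn : NonnegOn V ℓ) :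
    IsKSos V 1 ℓ := by
  set c₀ := ℓ.coeff 0 with hc₀
  set c : Fin n → ℝ := fun i => ℓ.coeff (Finsupp.single i 1) with hc
  have heval : ∀ S : Finset (Fin n), eval (Set.indicator (↑S) 1) ℓ = c₀ + ∑ i ∈ S, c i := by
    intro S
    rw [eval_affine haff, sum_mul_indicator]
  have hnn' : ∀ S : Finset (Fin n), S.card = k → 0 ≤ c₀ + ∑ i ∈ S, c i := by
    intro S hS
    rw [← heval S]
    exact hnn _ ((hV _).mpr ⟨S, hS, rfl⟩)
  obtain ⟨m, a, b, hm, ha, hb, hdec⟩ := partA_decomp hk c₀ c hnn'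
  set e : (Fin n ⊕ Fin n) ⊕ Fin 1 ≃ Fin (n + n + 1) :=
    (Equiv.sumCongr finSumFinEquiv (Equiv.refl (Fin 1))).trans finSumFinEquiv with he
  set g : (Fin n ⊕ Fin n) ⊕ Fin 1 → MvPolynomial (Fin n) ℝ :=
    Sum.elim (Sum.elim (fun j => C (Real.sqrt (a j)) * X j)
      (fun j => C (Real.sqrt (b j)) * (1 - X j))) (fun _ => C (Real.sqrt m)) with hg
  refine ⟨n + n + 1, fun i => g (e.symm i), ?_, ?_⟩
  · intro i
    obtain ⟨j, rfl⟩ : ∃ j, i = e j := ⟨e.symm i, (e.apply_symm_apply i).symm⟩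
    simp only [Equiv.symm_apply_apply]
    rcases j with (j | j) | u
    · simp only [hg, Sum.elim_inl]
      refine le_trans (totalDegree_mul _ _) ?_
      simp [totalDegree_C, totalDegree_X]
    · simp only [hg, Sum.elim_inl, Sum.elim_inr]
      refine le_trans (totalDegree_mul _ _) ?_
      have h1 : (1 - X j : MvPolynomial (Fin n) ℝ).totalDegree ≤ 1 := by
        refine le_trans (totalDegree_sub _ _) ?_
        simp [totalDegree_one, totalDegree_X]
      simp only [totalDegree_C]
      omega
    · simp [hg, totalDegree_C]
  · intro v hv
    obtain ⟨S, hS, rfl⟩ := (hV v).mp hv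
    have hsum : ∑ i : Fin (n + n + 1), (eval (Set.indicator (↑S) 1) (g (e.symm i))) ^ 2
        = ∑ j : (Fin n ⊕ Fin n) ⊕ Fin 1, (eval (Set.indicator (↑S) 1) (g j)) ^ 2 := by
      rw [← Equiv.sum_comp e (fun i => (eval (Set.indicator (↑S) 1) (g (e.symm i))) ^ 2)]
      exact Finset.sum_congr rfl fun j _ => by rw [Equiv.symm_apply_apply]
    rw [hsum, Fintype.sum_sum_type, Fintype.sum_sum_type]
    have hA : ∀ j : Fin n, (eval (Set.indicator (↑S) 1) (g (Sum.inl (Sum.inl j)))) ^ 2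
        = if j ∈ S then a j else 0 := by
      intro j
      simp only [hg, Sum.elim_inl, eval_mul, eval_C, eval_X]
      rw [indicator_apply']
      split
      · rw [mul_one, Real.sq_sqrt (ha j)]
      · rw [mul_zero]; ring
    have hB : ∀ j : Fin n, (eval (Set.indicator (↑S) 1) (g (Sum.inl (Sum.inr j)))) ^ 2
        = if j ∈ Sᶜ then b j else 0 := by
      intro j
      simp only [hg, Sum.elim_inl, Sum.elim_inr, eval_mul, eval_C, eval_sub, map_one, eval_X,
        indicator_apply', Finset.mem_compl]
      by_cases h : j ∈ S
      · rw [if_pos h, if_neg (not_not.mpr h), sub_self, mul_zero]; ring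
      · rw [if_neg h, if_pos h, sub_zero, mul_one, Real.sq_sqrt (hb j)]
    have hC : ∀ u : Fin 1, (eval (Set.indicator (↑S) 1) (g (Sum.inr u))) ^ 2 = m := by
      intro u
      simp only [hg, Sum.elim_inr, eval_C]
      exact Real.sq_sqrt hm
    rw [Finset.sum_congr rfl fun j _ => hA j, Finset.sum_congr rfl fun j _ => hB j,
      Finset.sum_congr rfl fun u _ => hC u, Finset.sum_ite_mem, Finset.sum_ite_mem,
      Finset.univ_inter, Finset.univ_inter, heval S, hdec S hS]
    simp; ring

lemma partB_level {n k : ℕ} (hk0 : 0 < k) (hkn : k < n) (V : Set (Fin n → ℝ))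
    (hV : ∀ v, v ∈ V ↔ ∃ S : Finset (Fin n), S.card = k ∧ v = Set.indicator ↑S 1)
    (ℓ : MvPolynomial (Fin n) ℝ) (hfd : IsFacetDefining V ℓ) :
    ((fun v => eval v ℓ) '' V).ncard ≤ 2 := by
  obtain ⟨haff, hnn, hFface, hFneV, hmax⟩ := hfd
  set c₀ := ℓ.coeff 0 with hc₀
  set c : Fin n → ℝ := fun i => ℓ.coeff (Finsupp.single i 1) with hc
  set L : Finset (Fin n) → ℝ := fun S => c₀ + ∑ i ∈ S, c i with hL
  have heval : ∀ S : Finset (Fin n), eval (Set.indicator (↑S) 1) ℓ = L S := fun S => by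
    rw [eval_affine haff, sum_mul_indicator]
  have hn2 : 2 ≤ n := by omega
  have himg2 : ∀ x y : ℝ, ((fun v => eval v ℓ) '' V) ⊆ {x, y} →
      ((fun v => eval v ℓ) '' V).ncard ≤ 2 := by
    intro x y hsub
    refine le_trans (Set.ncard_le_ncard hsub ((Set.finite_singleton y).insert x)) ?_
    refine le_trans (Set.ncard_insert_le _ _) ?_
    simp
  have himgsub : ∀ x y : ℝ, (∀ S : Finset (Fin n), S.card = k → L S = x ∨ L S = y) →
      ((fun v => eval v ℓ) '' V).ncard ≤ 2 := by
    intro x y hval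
    refine himg2 x y ?_
    rintro _ ⟨v, hv, rfl⟩
    obtain ⟨S, hS, rfl⟩ := (hV v).mp hv
    simp only [heval S, Set.mem_insert_iff, Set.mem_singleton_iff]
    exact hval S hS
  have hcard_univ : (Finset.univ : Finset (Fin n)).card = n := by simp
  have hmemS : ∀ i : Fin n, ∃ S : Finset (Fin n), S.card = k ∧ i ∈ S := by
    intro i
    obtain ⟨T, hTsub, hTcard⟩ := Finset.exists_subset_card_eq
      (show k - 1 ≤ (Finset.univ.erase i).card by
        rw [Finset.card_erase_of_mem (Finset.mem_univ i), hcard_univ]; omega)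
    refine ⟨insert i T, ?_, Finset.mem_insert_self i T⟩
    rw [Finset.card_insert_of_notMem (fun h => (Finset.mem_erase.mp (hTsub h)).1 rfl), hTcard]
    omega
  have hnotS : ∀ i : Fin n, ∃ S : Finset (Fin n), S.card = k ∧ i ∉ S := by
    intro i
    obtain ⟨T, hTsub, hTcard⟩ := Finset.exists_subset_card_eq
      (show k ≤ (Finset.univ.erase i).card by
        rw [Finset.card_erase_of_mem (Finset.mem_univ i), hcard_univ]; omega)
    exact ⟨T, hTcard, fun h => (Finset.mem_erase.mp (hTsub h)).1 rfl⟩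
  have hv01 : ∀ v ∈ V, ∀ i, v i = 0 ∨ v i = 1 := by
    intro v hv i
    obtain ⟨S, _, rfl⟩ := (hV v).mp hv
    rw [indicator_apply']
    split
    · exact Or.inr rfl
    · exact Or.inl rfl
  have hface0 : ∀ i, IsFaceOf V {v ∈ V | v i = 0} := by
    intro i
    refine ⟨X i, ?_, ?_, ?_⟩
    · rw [IsAffLin, totalDegree_X]
    · intro v hv
      rw [eval_X]
      rcases hv01 v hv i with h | h <;> rw [h] <;> norm_num
    · ext v; simp [eval_X]
  have hface1 : ∀ i, IsFaceOf V {v ∈ V | v i = 1} := by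
    intro i
    refine ⟨1 - X i, ?_, ?_, ?_⟩
    · refine le_trans (totalDegree_sub _ _) ?_
      simp [totalDegree_one, totalDegree_X]
    · intro v hv
      rw [eval_sub, map_one, eval_X]
      rcases hv01 v hv i with h | h <;> rw [h] <;> norm_num
    · ext v
      simp only [Set.mem_setOf_eq, eval_sub, map_one, eval_X, sub_eq_zero]
      exact ⟨fun ⟨h1, h2⟩ => ⟨h1, h2.symm⟩, fun ⟨h1, h2⟩ => ⟨h1, h2.symm⟩⟩
  have hne0 : ∀ i, {v ∈ V | v i = 0} ≠ V := by
    intro i hEq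
    obtain ⟨S, hScard, hiS⟩ := hmemS i
    have hmem : Set.indicator (↑S : Set (Fin n)) 1 ∈ V := (hV _).mpr ⟨S, hScard, rfl⟩
    rw [← hEq] at hmem
    have := hmem.2
    rw [indicator_apply', if_pos hiS] at this
    norm_num at this
  have hne1 : ∀ i, {v ∈ V | v i = 1} ≠ V := by
    intro i hEq
    obtain ⟨S, hScard, hiS⟩ := hnotS i
    have hmem : Set.indicator (↑S : Set (Fin n)) 1 ∈ V := (hV _).mpr ⟨S, hScard, rfl⟩
    rw [← hEq] at hmem
    have := hmem.2
    rw [indicator_apply', if_neg hiS] at this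
    norm_num at this
  have hnnL : ∀ S : Finset (Fin n), S.card = k → 0 ≤ L S := fun S hS => by
    rw [← heval]
    exact hnn _ ((hV _).mpr ⟨S, hS, rfl⟩)
  have hSne : ∃ S : Finset (Fin n), S.card = k ∧ L S ≠ 0 := by
    by_contra h
    push_neg at h
    apply hFneV
    ext v
    simp only [Set.mem_setOf_eq]
    constructor
    · exact fun hv => hv.1
    · intro hv
      refine ⟨hv, ?_⟩
      obtain ⟨S, hS, rfl⟩ := (hV v).mp hv
      rw [heval]
      exact h S hS
  have exch : ∀ S : Finset (Fin n), S.card = k → L S = 0 →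
      ∀ i ∈ S, ∀ j, j ∉ S → c i ≤ c j := by
    intro S hS hSz i hi j hj
    have hjE : j ∉ S.erase i := fun h => hj (Finset.mem_of_mem_erase h)
    have hcard : (insert j (S.erase i)).card = k := by
      rw [Finset.card_insert_of_notMem hjE, Finset.card_erase_of_mem hi, hS]
      omega
    have h0 := hnnL _ hcard
    simp only [hL] at h0 hSz
    rw [Finset.sum_insert hjE, Finset.sum_erase_eq_sub hi] at h0
    linarith
  have hdiff : ∀ S S' : Finset (Fin n), S.card = S'.card → ∀ x ∈ S, x ∉ S' →
      ∃ y ∈ S', y ∉ S := by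
    intro S S' hcard x hx hx'
    by_contra h
    push_neg at h
    have : S' = S := Finset.eq_of_subset_of_card_le h (le_of_eq hcard)
    rw [← this] at hx
    exact hx' hx
  have claim1 : ∃ i : Fin n, (∀ S, S.card = k → L S = 0 → i ∈ S) ∨
      (∀ S, S.card = k → L S = 0 → i ∉ S) := by
    by_contra hcon
    push_neg at hcon
    have hn0 : 0 < n := by omega
    obtain ⟨S₀, hS₀c, hS₀z, -⟩ := (hcon ⟨0, hn0⟩).1
    have hmaxf : ∀ i ∈ S₀, ∀ z ∈ S₀, c z ≤ c i := by
      intro i hi z hz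
      obtain ⟨S', hS'c, hS'z, hiS'⟩ := (hcon i).1
      obtain ⟨y, hyS', hyS₀⟩ := hdiff S₀ S' (by rw [hS₀c, hS'c]) i hi hiS'
      have h1 : c y ≤ c i := exch S' hS'c hS'z y hyS' i hiS'
      have h2 : c z ≤ c y := exch S₀ hS₀c hS₀z z hz y hyS₀
      linarith
    have hofff : ∀ j, j ∉ S₀ → ∃ x ∈ S₀, c j = c x := by
      intro j hj
      obtain ⟨S'', hc'', hz'', hj''⟩ := (hcon j).2
      obtain ⟨x, hxS₀, hxS''⟩ := hdiff S'' S₀ (by rw [hc'', hS₀c]) j hj'' hj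
      exact ⟨x, hxS₀, le_antisymm (exch S'' hc'' hz'' j hj'' x hxS'')
        (exch S₀ hS₀c hS₀z x hxS₀ j hj)⟩
    obtain ⟨x₀, hx₀⟩ : S₀.Nonempty := Finset.card_pos.mp (by rw [hS₀c]; exact hk0)
    have hconst : ∀ j, c j = c x₀ := by
      intro j
      by_cases hj : j ∈ S₀
      · exact le_antisymm (hmaxf x₀ hx₀ j hj) (hmaxf j hj x₀ hx₀)
      · obtain ⟨x, hx, hjx⟩ := hofff j hj
        rw [hjx]
        exact le_antisymm (hmaxf x₀ hx₀ x hx) (hmaxf x hx x₀ hx₀)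
    obtain ⟨T, hTc, hTnz⟩ := hSne
    apply hTnz
    have hsumT : ∑ i ∈ T, c i = ∑ i ∈ S₀, c i := by
      rw [Finset.sum_congr rfl fun i _ => hconst i,
        Finset.sum_congr rfl fun (i : Fin n) (_ : i ∈ S₀) => hconst i,
        Finset.sum_const, Finset.sum_const, hTc, hS₀c]
    simp only [hL] at hS₀z ⊢
    rw [hsumT]
    exact hS₀z
  by_cases hn2' : n = 2
  · -- n = 2, k = 1 : at most two points in V
    have hk1 : k = 1 := by omega
    subst hn2'
    subst hk1
    refine himg2 (L {0}) (L {1}) ?_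
    rintro _ ⟨v, hv, rfl⟩
    obtain ⟨S, hS, rfl⟩ := (hV v).mp hv
    obtain ⟨x, rfl⟩ := Finset.card_eq_one.mp hS
    simp only [heval, Set.mem_insert_iff, Set.mem_singleton_iff]
    have hx : x = 0 ∨ x = 1 := by
      rcases x with ⟨xv, hxv⟩
      interval_cases xv
      · exact Or.inl rfl
      · exact Or.inr rfl
    rcases hx with rfl | rfl
    · exact Or.inl rfl
    · exact Or.inr rfl
  have hn3 : 3 ≤ n := by omega
  have hpick : ∀ i : Fin n, ∃ j, j ≠ i := by
    intro i
    exact Fintype.exists_ne_of_one_lt_card (by simp; omega) i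
  have hpick2 : ∀ i j : Fin n, ∃ m, m ≠ i ∧ m ≠ j := by
    intro i j
    have hcard : 0 < ((Finset.univ.erase i).erase j).card := by
      have h1 : ((Finset.univ.erase i).erase j).card ≥ (Finset.univ.erase i).card - 1 :=
        Finset.pred_card_le_card_erase
      rw [Finset.card_erase_of_mem (Finset.mem_univ i), hcard_univ] at h1
      omega
    obtain ⟨m, hm⟩ := Finset.card_pos.mp hcard
    obtain ⟨hmj, hm'⟩ := Finset.mem_erase.mp hm
    exact ⟨m, (Finset.mem_erase.mp hm').1, hmj⟩
  rcases claim1 with ⟨i, hin | hout⟩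
  · -- every zero set contains i : facet is  {v | v i = 1}
    have hFsub : {v ∈ V | eval v ℓ = 0} ⊆ {v ∈ V | v i = 1} := by
      rintro v ⟨hvV, hv0⟩
      refine ⟨hvV, ?_⟩
      obtain ⟨S, hS, rfl⟩ := (hV v).mp hvV
      rw [heval] at hv0
      rw [indicator_apply', if_pos (hin S hS hv0)]
    have hFeq := hmax _ (hface1 i) (hne1 i) hFsub
    have hzero : ∀ S : Finset (Fin n), S.card = k → i ∈ S → L S = 0 := by
      intro S hS hiS
      have hmem : Set.indicator (↑S : Set (Fin n)) 1 ∈ {v ∈ V | v i = 1} :=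
        ⟨(hV _).mpr ⟨S, hS, rfl⟩, by rw [indicator_apply', if_pos hiS]⟩
      rw [hFeq] at hmem
      rw [← heval]
      exact hmem.2
    by_cases hk1 : k = 1
    · -- impossible : the singleton {ind {i}} is not a maximal face when n ≥ 3
      exfalso
      obtain ⟨j, hj⟩ := hpick i
      have hFsub2 : {v ∈ V | eval v ℓ = 0} ⊆ {v ∈ V | v j = 0} := by
        rintro v ⟨hvV, hv0⟩
        refine ⟨hvV, ?_⟩
        obtain ⟨S, hS, rfl⟩ := (hV v).mp hvV
        rw [heval] at hv0
        have hiS := hin S hS hv0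
        obtain ⟨x, rfl⟩ := Finset.card_eq_one.mp (by rw [hS, hk1])
        have hx : x = i := (Finset.mem_singleton.mp hiS).symm
        rw [indicator_apply', if_neg (by rw [Finset.mem_singleton, hx]; exact hj)]
      have hFeq2 := hmax _ (hface0 j) (hne0 j) hFsub2
      obtain ⟨m, hmi, hmj⟩ := hpick2 i j
      have hmcard : ({m} : Finset (Fin n)).card = k := by rw [Finset.card_singleton, hk1]
      have hmem : Set.indicator (↑({m} : Finset (Fin n)) : Set (Fin n)) 1 ∈ {v ∈ V | v j = 0} :=
        ⟨(hV _).mpr ⟨{m}, hmcard, rfl⟩, by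
          rw [indicator_apply', if_neg (by rw [Finset.mem_singleton]; exact fun h => hmj h.symm)]⟩
      rw [hFeq2] at hmem
      have hLm : L {m} = 0 := by rw [← heval]; exact hmem.2
      have := hin {m} hmcard hLm
      exact hmi (Finset.mem_singleton.mp this).symm
    · have hk2 : 2 ≤ k := by omega
      have hpair : ∀ j, j ≠ i → ∀ j', j' ≠ i → j ≠ j' → c j = c j' := by
        intro j hj j' hj' hjj'
        have hcard3 : (((Finset.univ.erase i).erase j).erase j').card = n - 3 := by
          rw [Finset.card_erase_of_mem (Finset.mem_erase.mpr ⟨fun h => hjj' h.symm,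
              Finset.mem_erase.mpr ⟨hj', Finset.mem_univ j'⟩⟩),
            Finset.card_erase_of_mem (Finset.mem_erase.mpr ⟨hj, Finset.mem_univ j⟩),
            Finset.card_erase_of_mem (Finset.mem_univ i), hcard_univ]
          omega
        obtain ⟨T, hTsub, hTcard⟩ := Finset.exists_subset_card_eq
          (show k - 2 ≤ (((Finset.univ.erase i).erase j).erase j').card by rw [hcard3]; omega)
        have hiT : i ∉ T := fun h =>
          (Finset.mem_erase.mp (Finset.mem_of_mem_erase (Finset.mem_of_mem_erase (hTsub h)))).1 rfl
        have hjT : j ∉ T := fun h => (Finset.mem_erase.mp (Finset.mem_of_mem_erase (hTsub h))).1 rfl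
        have hj'T : j' ∉ T := fun h => (Finset.mem_erase.mp (hTsub h)).1 rfl
        have hij : i ∉ insert j T := by
          rw [Finset.mem_insert]
          rintro (h | h)
          · exact hj h.symm
          · exact hiT h
        have hij' : i ∉ insert j' T := by
          rw [Finset.mem_insert]
          rintro (h | h)
          · exact hj' h.symm
          · exact hiT h
        have hcardS : (insert i (insert j T)).card = k := by
          rw [Finset.card_insert_of_notMem hij, Finset.card_insert_of_notMem hjT, hTcard]
          omega
        have hcardS' : (insert i (insert j' T)).card = k := by
          rw [Finset.card_insert_of_notMem hij', Finset.card_insert_of_notMem hj'T, hTcard]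
          omega
        have hz1 := hzero _ hcardS (Finset.mem_insert_self i _)
        have hz2 := hzero _ hcardS' (Finset.mem_insert_self i _)
        simp only [hL] at hz1 hz2
        rw [Finset.sum_insert hij, Finset.sum_insert hjT] at hz1
        rw [Finset.sum_insert hij', Finset.sum_insert hj'T] at hz2
        linarith
      obtain ⟨j₀, hj₀⟩ := hpick i
      have hconst : ∀ j, j ≠ i → c j = c j₀ := by
        intro j hj
        by_cases h : j = j₀
        · rw [h]
        · exact hpair j hj j₀ hj₀ h
      refine himgsub 0 (c₀ + k * c j₀) ?_
      intro S hS
      by_cases hiS : i ∈ S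
      · exact Or.inl (hzero S hS hiS)
      · right
        simp only [hL]
        have hsum : ∑ x ∈ S, c x = k * c j₀ := by
          rw [Finset.sum_congr rfl (fun x hx => hconst x (fun h => hiS (h ▸ hx))),
            Finset.sum_const, hS, nsmul_eq_mul]
        rw [hsum]
  · -- every zero set avoids i : facet is {v | v i = 0}
    have hFsub : {v ∈ V | eval v ℓ = 0} ⊆ {v ∈ V | v i = 0} := by
      rintro v ⟨hvV, hv0⟩
      refine ⟨hvV, ?_⟩
      obtain ⟨S, hS, rfl⟩ := (hV v).mp hvV
      rw [heval] at hv0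
      rw [indicator_apply', if_neg (hout S hS hv0)]
    have hFeq := hmax _ (hface0 i) (hne0 i) hFsub
    have hzero : ∀ S : Finset (Fin n), S.card = k → i ∉ S → L S = 0 := by
      intro S hS hiS
      have hmem : Set.indicator (↑S : Set (Fin n)) 1 ∈ {v ∈ V | v i = 0} :=
        ⟨(hV _).mpr ⟨S, hS, rfl⟩, by rw [indicator_apply', if_neg hiS]⟩
      rw [hFeq] at hmem
      rw [← heval]
      exact hmem.2
    by_cases hkn1 : k + 1 = n
    · -- impossible : the singleton {ind (univ.erase i)} is not a maximal face when n ≥ 3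
      exfalso
      obtain ⟨j, hj⟩ := hpick i
      have herasecard : (Finset.univ.erase i).card = k := by
        rw [Finset.card_erase_of_mem (Finset.mem_univ i), hcard_univ]
        omega
      have hSeq : ∀ S : Finset (Fin n), S.card = k → i ∉ S → S = Finset.univ.erase i := by
        intro S hS hiS
        refine Finset.eq_of_subset_of_card_le
          (fun x hx => Finset.mem_erase.mpr ⟨fun h => hiS (h ▸ hx), Finset.mem_univ x⟩) ?_
        rw [herasecard, hS]
      have hFsub2 : {v ∈ V | eval v ℓ = 0} ⊆ {v ∈ V | v j = 1} := by
        rintro v ⟨hvV, hv0⟩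
        refine ⟨hvV, ?_⟩
        obtain ⟨S, hS, rfl⟩ := (hV v).mp hvV
        rw [heval] at hv0
        rw [hSeq S hS (hout S hS hv0), indicator_apply',
          if_pos (Finset.mem_erase.mpr ⟨hj, Finset.mem_univ j⟩)]
      have hFeq2 := hmax _ (hface1 j) (hne1 j) hFsub2
      obtain ⟨m, hmi, hmj⟩ := hpick2 i j
      have hmcard : (Finset.univ.erase m).card = k := by
        rw [Finset.card_erase_of_mem (Finset.mem_univ m), hcard_univ]
        omega
      have hmem : Set.indicator (↑(Finset.univ.erase m) : Set (Fin n)) 1 ∈ {v ∈ V | v j = 1} :=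
        ⟨(hV _).mpr ⟨_, hmcard, rfl⟩, by
          rw [indicator_apply',
            if_pos (Finset.mem_erase.mpr ⟨fun h => hmj h.symm, Finset.mem_univ j⟩)]⟩
      rw [hFeq2] at hmem
      have hLm : L (Finset.univ.erase m) = 0 := by rw [← heval]; exact hmem.2
      have := hout _ hmcard hLm
      exact this (Finset.mem_erase.mpr ⟨fun h => hmi h.symm, Finset.mem_univ i⟩)
    · have hkn2 : k + 2 ≤ n := by omega
      have hpair : ∀ j, j ≠ i → ∀ j', j' ≠ i → j ≠ j' → c j = c j' := by
        intro j hj j' hj' hjj'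
        have hcard3 : (((Finset.univ.erase i).erase j).erase j').card = n - 3 := by
          rw [Finset.card_erase_of_mem (Finset.mem_erase.mpr ⟨fun h => hjj' h.symm,
              Finset.mem_erase.mpr ⟨hj', Finset.mem_univ j'⟩⟩),
            Finset.card_erase_of_mem (Finset.mem_erase.mpr ⟨hj, Finset.mem_univ j⟩),
            Finset.card_erase_of_mem (Finset.mem_univ i), hcard_univ]
          omega
        obtain ⟨T, hTsub, hTcard⟩ := Finset.exists_subset_card_eq
          (show k - 1 ≤ (((Finset.univ.erase i).erase j).erase j').card by rw [hcard3]; omega)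
        have hiT : i ∉ T := fun h =>
          (Finset.mem_erase.mp (Finset.mem_of_mem_erase (Finset.mem_of_mem_erase (hTsub h)))).1 rfl
        have hjT : j ∉ T := fun h => (Finset.mem_erase.mp (Finset.mem_of_mem_erase (hTsub h))).1 rfl
        have hj'T : j' ∉ T := fun h => (Finset.mem_erase.mp (hTsub h)).1 rfl
        have hcardS : (insert j T).card = k := by
          rw [Finset.card_insert_of_notMem hjT, hTcard]
          omega
        have hcardS' : (insert j' T).card = k := by
          rw [Finset.card_insert_of_notMem hj'T, hTcard]
          omega
        have hiS : i ∉ insert j T := by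
          rw [Finset.mem_insert]
          rintro (h | h)
          · exact hj h.symm
          · exact hiT h
        have hiS' : i ∉ insert j' T := by
          rw [Finset.mem_insert]
          rintro (h | h)
          · exact hj' h.symm
          · exact hiT h
        have hz1 := hzero _ hcardS hiS
        have hz2 := hzero _ hcardS' hiS'
        simp only [hL] at hz1 hz2
        rw [Finset.sum_insert hjT] at hz1
        rw [Finset.sum_insert hj'T] at hz2
        linarith
      obtain ⟨j₀, hj₀⟩ := hpick i
      have hconst : ∀ j, j ≠ i → c j = c j₀ := by
        intro j hj
        by_cases h : j = j₀
        · rw [h]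
        · exact hpair j hj j₀ hj₀ h
      refine himgsub 0 (c₀ + c i + (k - 1) * c j₀) ?_
      intro S hS
      by_cases hiS : i ∈ S
      · right
        simp only [hL]
        have hsum : ∑ x ∈ S, c x = c i + (k - 1) * c j₀ := by
          rw [← Finset.add_sum_erase S c hiS]
          congr 1
          rw [Finset.sum_congr rfl (fun x hx => hconst x (Finset.mem_erase.mp hx).1),
            Finset.sum_const, Finset.card_erase_of_mem hiS, hS, nsmul_eq_mul]
          push_cast [Nat.cast_sub hk0]
          ring
        rw [hsum]
        ring
      · exact Or.inl (hzero S hS hiS)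

lemma img_singleton {n k : ℕ} (V : Set (Fin n → ℝ))
    (hV : ∀ v, v ∈ V ↔ ∃ S : Finset (Fin n), S.card = k ∧ v = Set.indicator ↑S 1)
    (S₀ : Finset (Fin n)) (hS₀ : ∀ S : Finset (Fin n), S.card = k → S = S₀)
    (ℓ : MvPolynomial (Fin n) ℝ) :
    ((fun v => eval v ℓ) '' V).ncard ≤ 2 := by
  have hsub : ((fun v => eval v ℓ) '' V) ⊆ {eval (Set.indicator ↑S₀ 1) ℓ} := by
    rintro _ ⟨v, hv, rfl⟩
    obtain ⟨S, hS, rfl⟩ := (hV v).mp hv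
    rw [hS₀ S hS]
    rfl
  exact le_trans (Set.ncard_le_ncard hsub (Set.finite_singleton _)) (by simp)

/-- Every uniform matroid `U_{n,k}` (the matroid on `{1,…,n}` whose bases
are all `k`-element subsets, `0 ≤ k ≤ n`) is 2-level, and consequently has Theta rank at
most 1. -/
theorem uniform_matroid_two_level {n k : ℕ} (hk : k ≤ n)
    (M : Matroid (Fin n)) (hE : M.E = Set.univ)
    (hB : ∀ B, M.IsBase B ↔ B.ncard = k) :
    levelness (baseConfig M) ≤ 2 ∧ thetaRank (baseConfig M) ≤ 1 := by
  have hV : ∀ v, v ∈ baseConfig M ↔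
      ∃ S : Finset (Fin n), S.card = k ∧ v = Set.indicator ↑S 1 :=
    fun v => mem_baseConfig_iff hB
  constructor
  · refine Nat.sInf_le ?_
    simp only [Set.mem_setOf_eq]
    intro ℓ hfd
    by_cases hk0 : 0 < k
    · by_cases hkn : k < n
      · exact partB_level hk0 hkn _ hV ℓ hfd
      · have hkn' : k = n := by omega
        refine img_singleton _ hV Finset.univ (fun S hS => ?_) ℓ
        apply Finset.eq_univ_of_card
        rw [hS, hkn', Fintype.card_fin]
    · have hk0' : k = 0 := by omega
      refine img_singleton _ hV ∅ (fun S hS => ?_) ℓ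
      exact Finset.card_eq_zero.mp (by rw [hS, hk0'])
  · refine Nat.sInf_le ?_
    simp only [Set.mem_setOf_eq]
    intro ℓ haff hnn
    exact partA_sos hk _ hV ℓ haff hnn
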